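/- Let I ⊆ ℝ. The set {(ε₁ e^{-r}, ε₂ e^{r})/√(2 cosh 2r) : r ∈ I, ε₁, ε₂ ∈ {±1}} is dense in the unit circle of ℝ² if and only if I is dense in ℝ. -/
import Mathlib

noncomputable def ww (r : ℝ) : ℝ := Real.exp r / Real.sqrt (2 * Real.cosh (2 * r))

lemma cosh2_pos (r : ℝ) : 0 < 2 * Real.cosh (2 * r) := by positivity

lemma ww_pos (r : ℝ) : 0 < ww r :=
  div_pos (Real.exp_pos r) (Real.sqrt_pos.2 (cosh2_pos r))

lemma ww_sq (r : ℝ) : ww r ^ 2 = 1 / (1 + Real.exp (-(4 * r))) := by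
  unfold ww
  rw [div_pow, Real.sq_sqrt (cosh2_pos r).le, Real.cosh_eq]
  have h1 : Real.exp r ^ 2 = Real.exp (2 * r) := by
    rw [sq, ← Real.exp_add]; ring_nf
  have h2 : Real.exp (2 * r) * Real.exp (-(4 * r)) = Real.exp (-(2 * r)) := by
    rw [← Real.exp_add]; ring_nf
  rw [h1, div_eq_div_iff (by positivity) (by positivity)]
  nlinarith [h2]

lemma le_of_sq_le {a b : ℝ} (ha : 0 ≤ a) (hb : 0 ≤ b) (h : a ^ 2 ≤ b ^ 2) : a ≤ b := by
  nlinarith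

lemma ww_lt_one (r : ℝ) : ww r < 1 := by
  have he := Real.exp_pos (-(4 * r))
  have hsq : ww r ^ 2 < 1 ^ 2 := by
    rw [ww_sq, one_pow]
    rw [div_lt_one (by positivity)]; linarith
  exact lt_of_pow_lt_pow_left₀ 2 zero_le_one hsq

lemma ww_mono : StrictMono ww := by
  intro r s hrs
  have h1 := ww_sq r
  have h2 := ww_sq s
  have hp := ww_pos r
  have hps := ww_pos s
  have he : Real.exp (-(4 * s)) < Real.exp (-(4 * r)) := by
    apply Real.exp_lt_exp.2; linarith
  have hsq : ww r ^ 2 < ww s ^ 2 := by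
    rw [h1, h2]
    have h3 : (0:ℝ) < 1 + Real.exp (-(4 * s)) := by positivity
    have h4 : (0:ℝ) < 1 + Real.exp (-(4 * r)) := by positivity
    rw [div_lt_div_iff₀ h4 h3]; linarith
  nlinarith

lemma ww_circle (r : ℝ) : ww (-r) ^ 2 + ww r ^ 2 = 1 := by
  rw [ww_sq, ww_sq]
  have h : Real.exp (-(4 * -r)) = (Real.exp (-(4 * r)))⁻¹ := by
    rw [← Real.exp_neg]; ring_nf
  rw [h]
  have he := (Real.exp_pos (-(4 * r))).ne'
  field_simp
  ring

lemma ww_cont : Continuous ww := by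
  apply Real.continuous_exp.div
  · exact (Real.continuous_sqrt.comp (by continuity))
  · intro r; exact (Real.sqrt_pos.2 (cosh2_pos r)).ne'

lemma ww_first (r : ℝ) : Real.exp (-r) / Real.sqrt (2 * Real.cosh (2 * r)) = ww (-r) := by
  unfold ww
  rw [show (2:ℝ) * -r = -(2 * r) by ring, Real.cosh_neg]

lemma ww_small {r : ℝ} (hr : 1 ≤ r) : ww (-r) ≤ Real.exp (-(2 * r)) := by
  have hsq : ww (-r) ^ 2 ≤ Real.exp (-(2 * r)) ^ 2 := by
    rw [ww_sq]
    have h1 : Real.exp (-(2 * r)) ^ 2 = Real.exp (-(4 * r)) := by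
      rw [sq, ← Real.exp_add]; ring_nf
    rw [h1, show -(4 * -r) = 4 * r by ring]
    rw [div_le_iff₀ (by positivity)]
    have h0 : Real.exp (-(4*r)) * Real.exp (4*r) = 1 := by
      rw [← Real.exp_add]; ring_nf; exact Real.exp_zero
    nlinarith [Real.exp_pos (-(4*r))]
  exact le_of_sq_le (ww_pos _).le (Real.exp_pos _).le hsq

lemma ww_near_one {r : ℝ} (hr : 1 ≤ r) : 1 - ww r ≤ Real.exp (-(2 * r)) := by
  have he : Real.exp (-(4 * r)) ≤ Real.exp (-(2 * r)) := by
    apply Real.exp_le_exp.2; linarith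
  have h4 := Real.exp_pos (-(4 * r))
  rcases le_or_gt (1 - Real.exp (-(4*r))) 0 with h | h
  · nlinarith [ww_pos r]
  · have hsq : (1 - Real.exp (-(4*r))) ^ 2 ≤ ww r ^ 2 := by
      rw [ww_sq, le_div_iff₀ (by positivity)]
      nlinarith [mul_nonneg (mul_nonneg h4.le h4.le) (by linarith : (0:ℝ) ≤ 1 - Real.exp (-(4*r)))]
    have := le_of_sq_le h.le (ww_pos r).le hsq
    linarith

lemma ww_inv {a b : ℝ} (ha : a ≠ 0) (hb : b ≠ 0) (hab : a ^ 2 + b ^ 2 = 1) :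
    ∃ r : ℝ, ww (-r) = |a| ∧ ww r = |b| := by
  refine ⟨Real.log (b ^ 2 / a ^ 2) / 4, ?_, ?_⟩
  · have h : Real.exp (-(4 * -(Real.log (b ^ 2 / a ^ 2) / 4))) = b ^ 2 / a ^ 2 := by
      rw [show -(4 * -(Real.log (b ^ 2 / a ^ 2) / 4)) = Real.log (b^2/a^2) by ring]
      exact Real.exp_log (by positivity)
    have hsq : ww (-(Real.log (b ^ 2 / a ^ 2) / 4)) ^ 2 = |a| ^ 2 := by
      rw [ww_sq, h, sq_abs]
      field_simp
      linarith
    have := le_of_sq_le (ww_pos _).le (abs_nonneg a) hsq.le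
    have := le_of_sq_le (abs_nonneg a) (ww_pos _).le hsq.ge
    linarith
  · have h : Real.exp (-(4 * (Real.log (b ^ 2 / a ^ 2) / 4))) = a ^ 2 / b ^ 2 := by
      rw [show -(4 * (Real.log (b ^ 2 / a ^ 2) / 4)) = -Real.log (b^2/a^2) by ring,
        Real.log_div (by positivity) (by positivity), neg_sub, ← Real.log_div (by positivity) (by positivity)]
      exact Real.exp_log (by positivity)
    have hsq : ww (Real.log (b ^ 2 / a ^ 2) / 4) ^ 2 = |b| ^ 2 := by
      rw [ww_sq, h, sq_abs]
      field_simp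
      linarith
    have := le_of_sq_le (ww_pos _).le (abs_nonneg b) hsq.le
    have := le_of_sq_le (abs_nonneg b) (ww_pos _).le hsq.ge
    linarith

lemma exp_small {M s δ : ℝ} (hδ : 0 < δ) (hM1 : 1 ≤ M) (hMl : -Real.log δ ≤ M)
    (hs : M < s) : Real.exp (-(2 * s)) < δ := by
  have : -(2 * s) < Real.log δ := by linarith
  calc Real.exp (-(2 * s)) < Real.exp (Real.log δ) := Real.exp_lt_exp.2 this
    _ = δ := Real.exp_log hδ

lemma sgn_mul_abs {a ε : ℝ} (hε : ε = if 0 < a then (1:ℝ) else -1) (ha : a ≠ 0) :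
    ε * |a| = a := by
  subst hε
  split_ifs with h
  · rw [abs_of_pos h, one_mul]
  · rw [abs_of_neg (lt_of_le_of_ne (not_lt.1 h) ha)]; ring

theorem squeezed_quadratures_dense_iff (I : Set ℝ) :
    ({x : ℝ × ℝ | x.1 ^ 2 + x.2 ^ 2 = 1} ⊆
        closure {x : ℝ × ℝ | ∃ r ∈ I, ∃ ε₁ : ℝ, (ε₁ = 1 ∨ ε₁ = -1) ∧
          ∃ ε₂ : ℝ, (ε₂ = 1 ∨ ε₂ = -1) ∧
          x = (ε₁ * Real.exp (-r) / Real.sqrt (2 * Real.cosh (2 * r)),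
               ε₂ * Real.exp r / Real.sqrt (2 * Real.cosh (2 * r)))}) ↔
      Dense I := by
  constructor
  · -- forward: subset of closure implies I dense
    intro h
    refine Metric.dense_iff.2 fun x ε hε => ?_
    by_contra hc
    rw [Set.not_nonempty_iff_eq_empty] at hc
    have hsep : ∀ r ∈ I, r ≤ x - ε ∨ x + ε ≤ r := by
      intro r hr
      have hnm : r ∉ Metric.ball x ε := fun hm =>
        Set.eq_empty_iff_forall_notMem.1 hc r ⟨hm, hr⟩
      rw [Metric.mem_ball, Real.dist_eq, not_lt] at hnm
      rcases le_abs.1 hnm with h1 | h1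
      · right; linarith
      · left; linarith
    set δ : ℝ := min (ww x) (min (ww x - ww (x - ε)) (ww (x + ε) - ww x)) with hδdef
    have hδ : 0 < δ := by
      refine lt_min (ww_pos x) (lt_min ?_ ?_)
      · have := ww_mono (show x - ε < x by linarith); linarith
      · have := ww_mono (show x < x + ε by linarith); linarith
    have hp : ((ww (-x), ww x) : ℝ × ℝ) ∈ {x : ℝ × ℝ | x.1 ^ 2 + x.2 ^ 2 = 1} :=
      ww_circle x
    obtain ⟨q, hqS, hdist⟩ := Metric.mem_closure_iff.1 (h hp) δ hδ
    obtain ⟨r, hrI, ε₁, hε₁, ε₂, hε₂, rfl⟩ := hqS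
    have h2 : |ww x - ε₂ * ww r| < δ := by
      rw [Prod.dist_eq] at hdist
      have := (max_lt_iff.1 hdist).2
      simpa [Real.dist_eq, mul_div_assoc, ww] using this
    rcases hε₂ with rfl | rfl
    · rw [one_mul] at h2
      have habs1 : ww x - ww r ≤ |ww x - ww r| := le_abs_self _
      have habs2 : ww r - ww x ≤ |ww x - ww r| := by
        rw [abs_sub_comm]; exact le_abs_self _
      rcases hsep r hrI with hr1 | hr1
      · have hm : ww r ≤ ww (x - ε) := ww_mono.monotone hr1
        have : δ ≤ ww x - ww (x - ε) := le_trans (min_le_right _ _) (min_le_left _ _)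
        linarith
      · have hm : ww (x + ε) ≤ ww r := ww_mono.monotone hr1
        have : δ ≤ ww (x + ε) - ww x := le_trans (min_le_right _ _) (min_le_right _ _)
        linarith
    · have hpos : 0 < ww x + ww r := add_pos (ww_pos x) (ww_pos r)
      rw [show ww x - -1 * ww r = ww x + ww r by ring, abs_of_pos hpos] at h2
      have : δ ≤ ww x := min_le_left _ _
      have := ww_pos r
      linarith
  · -- backward: I dense implies circle in closure
    intro hI p hp
    simp only [Set.mem_setOf_eq] at hp
    rw [Metric.mem_closure_iff]
    intro δ hδ
    set M : ℝ := max 1 (-Real.log δ) with hM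
    rcases eq_or_ne p.1 0 with h1 | h1
    · -- p = (0, ±1)
      have h2 : p.2 = 1 ∨ p.2 = -1 := by
        have : (p.2 - 1) * (p.2 + 1) = 0 := by nlinarith
        rcases mul_eq_zero.1 this with h | h
        · left; linarith
        · right; linarith
      obtain ⟨s, hsI, hds⟩ := Metric.mem_closure_iff.1 (hI (M + 1)) 1 one_pos
      have hsM : M < s := by
        rw [Real.dist_eq] at hds
        rcases abs_lt.1 hds with ⟨ha, hb⟩
        linarith
      have hs1 : 1 ≤ s := le_trans (le_max_left _ _) hsM.le
      have hexp : Real.exp (-(2 * s)) < δ :=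
        exp_small hδ (le_max_left _ _) (le_max_right _ _) hsM
      refine ⟨((1 : ℝ) * Real.exp (-s) / Real.sqrt (2 * Real.cosh (2 * s)),
        p.2 * Real.exp s / Real.sqrt (2 * Real.cosh (2 * s))),
        ⟨s, hsI, 1, Or.inl rfl, p.2, h2, rfl⟩, ?_⟩
      rw [Prod.dist_eq]
      have hc1 : dist p.1 ((1 : ℝ) * Real.exp (-s) / Real.sqrt (2 * Real.cosh (2 * s))) < δ := by
        rw [Real.dist_eq, h1, one_mul, ww_first]
        rw [zero_sub, abs_neg, abs_of_pos (ww_pos _)]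
        exact lt_of_le_of_lt (ww_small hs1) hexp
      have hc2 : dist p.2 (p.2 * Real.exp s / Real.sqrt (2 * Real.cosh (2 * s))) < δ := by
        rw [Real.dist_eq, mul_div_assoc]
        have hww := ww_near_one hs1
        have hlt := ww_lt_one s
        have hwp := ww_pos s
        have : |p.2 - p.2 * ww s| = |p.2| * |1 - ww s| := by
          rw [← abs_mul]; ring_nf
        rw [show p.2 * (Real.exp s / Real.sqrt (2 * Real.cosh (2 * s))) = p.2 * ww s from rfl,
          this]
        have habs : |p.2| = 1 := by rcases h2 with h | h <;> simp [h]
        rw [habs, one_mul, abs_of_pos (by linarith)]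
        linarith
      exact max_lt hc1 hc2
    · rcases eq_or_ne p.2 0 with h2 | h2
      · -- p = (±1, 0)
        have h1' : p.1 = 1 ∨ p.1 = -1 := by
          have : (p.1 - 1) * (p.1 + 1) = 0 := by nlinarith
          rcases mul_eq_zero.1 this with h | h
          · left; linarith
          · right; linarith
        obtain ⟨s, hsI, hds⟩ := Metric.mem_closure_iff.1 (hI (-(M + 1))) 1 one_pos
        have hsM : s < -M := by
          rw [Real.dist_eq] at hds
          rcases abs_lt.1 hds with ⟨ha, hb⟩
          linarith
        have hs1 : 1 ≤ -s := by
          have := le_max_left 1 (-Real.log δ); rw [← hM] at this; linarith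
        have hexp : Real.exp (-(2 * -s)) < δ :=
          exp_small hδ (le_max_left _ _) (le_max_right _ _) (by linarith)
        refine ⟨(p.1 * Real.exp (-s) / Real.sqrt (2 * Real.cosh (2 * s)),
          (1 : ℝ) * Real.exp s / Real.sqrt (2 * Real.cosh (2 * s))),
          ⟨s, hsI, p.1, h1', 1, Or.inl rfl, rfl⟩, ?_⟩
        rw [Prod.dist_eq]
        have hc1 : dist p.1 (p.1 * Real.exp (-s) / Real.sqrt (2 * Real.cosh (2 * s))) < δ := by
          rw [Real.dist_eq, mul_div_assoc, ww_first]
          have hww := ww_near_one hs1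
          have hlt := ww_lt_one (-s)
          have : |p.1 - p.1 * ww (-s)| = |p.1| * |1 - ww (-s)| := by
            rw [← abs_mul]; ring_nf
          rw [this]
          have habs : |p.1| = 1 := by rcases h1' with h | h <;> simp [h]
          rw [habs, one_mul, abs_of_pos (by linarith)]
          linarith
        have hc2 : dist p.2 ((1 : ℝ) * Real.exp s / Real.sqrt (2 * Real.cosh (2 * s))) < δ := by
          rw [Real.dist_eq, h2, one_mul]
          have : Real.exp s / Real.sqrt (2 * Real.cosh (2 * s)) = ww (-(-s)) := by
            rw [neg_neg]; rfl
          rw [this, zero_sub, abs_neg, abs_of_pos (ww_pos _)]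
          exact lt_of_le_of_lt (ww_small hs1) hexp
        exact max_lt hc1 hc2
      · -- generic point
        obtain ⟨r₀, hr1, hr2⟩ := ww_inv h1 h2 hp
        set ε₁ : ℝ := if 0 < p.1 then 1 else -1 with hε₁def
        set ε₂ : ℝ := if 0 < p.2 then 1 else -1 with hε₂def
        have hε₁ : ε₁ = 1 ∨ ε₁ = -1 := by rw [hε₁def]; split_ifs <;> simp
        have hε₂ : ε₂ = 1 ∨ ε₂ = -1 := by rw [hε₂def]; split_ifs <;> simp
        set G : ℝ → ℝ × ℝ := fun r => (ε₁ * ww (-r), ε₂ * ww r) with hGdef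
        have hG : Continuous G := by
          apply Continuous.prodMk
          · exact continuous_const.mul (ww_cont.comp continuous_neg)
          · exact continuous_const.mul ww_cont
        have hGp : G r₀ = p := by
          rw [hGdef]
          have e1 : ε₁ * ww (-r₀) = p.1 := by
            rw [hr1]; exact sgn_mul_abs hε₁def h1
          have e2 : ε₂ * ww r₀ = p.2 := by
            rw [hr2]; exact sgn_mul_abs hε₂def h2
          simp only [e1, e2]
        obtain ⟨η, hη, hball⟩ := Metric.continuousAt_iff.1 (hG.continuousAt (x := r₀)) δ hδ
        obtain ⟨s, hsI, hds⟩ := Metric.mem_closure_iff.1 (hI r₀) η hη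
        refine ⟨(ε₁ * Real.exp (-s) / Real.sqrt (2 * Real.cosh (2 * s)),
          ε₂ * Real.exp s / Real.sqrt (2 * Real.cosh (2 * s))),
          ⟨s, hsI, ε₁, hε₁, ε₂, hε₂, rfl⟩, ?_⟩
        have hqG : (ε₁ * Real.exp (-s) / Real.sqrt (2 * Real.cosh (2 * s)),
            ε₂ * Real.exp s / Real.sqrt (2 * Real.cosh (2 * s))) = G s := by
          rw [hGdef]
          simp only [mul_div_assoc, ww_first]
          rfl
        rw [hqG, ← hGp, dist_comm]
        exact hball (by rw [dist_comm]; exact hds)
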